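/- Let H be a real Hilbert space, r and s orthogonal (i.e., isometric linear, surjective) transformations of H, and v a unit vector such that r(v) = v and ⟨s⁻¹ ∘ rᴺ ∘ s (v), v⟩ = 0 for every positive integer N. Then ⟨s(v), v⟩ = 0. -/

import Mathlib

/-- If `r, s` are orthogonal transformations of a real Hilbert space,
`v` is a unit vector fixed by `r`, and `⟨s⁻¹(rᴺ(s v)), v⟩ = 0` for every positive
integer `N`, then `⟨s v, v⟩ = 0`. -/
theorem stmt1 {H : Type*} [NormedAddCommGroup H] [InnerProductSpace ℝ H]
    [CompleteSpace H] (r s : H ≃ₗᵢ[ℝ] H) (v : H) (hv : ‖v‖ = 1)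
    (hrv : r v = v)
    (horth : ∀ N : ℕ, 0 < N → (inner ℝ (s.symm ((⇑r)^[N] (s v))) v : ℝ) = 0) :
    (inner ℝ (s v) v : ℝ) = 0 := by
  set α : ℝ := inner ℝ (s v) v with hα
  set w : H := s v - α • v with hw
  have hvv : (inner ℝ v v : ℝ) = 1 := by
    rw [real_inner_self_eq_norm_sq, hv]; norm_num
  have hwv : (inner ℝ w v : ℝ) = 0 := by
    simp [hw, inner_sub_left, inner_smul_left, hvv, hv, ← hα]
  have hiterfix : ∀ N : ℕ, (⇑r)^[N] v = v := fun N => Function.iterate_fixed hrv N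
  have hinner_iter : ∀ (N : ℕ) (x y : H),
      (inner ℝ ((⇑r)^[N] x) ((⇑r)^[N] y) : ℝ) = inner ℝ x y := by
    intro N
    induction N with
    | zero => intro x y; simp
    | succ n ih =>
      intro x y
      rw [Function.iterate_succ_apply', Function.iterate_succ_apply',
        r.inner_map_map, ih]
  have hiter_lin : ∀ (N : ℕ) (a : ℝ) (x y : H),
      (⇑r)^[N] (a • x + y) = a • (⇑r)^[N] x + (⇑r)^[N] y := by
    intro N
    induction N with
    | zero => intro a x y; simp
    | succ n ih =>
      intro a x y
      rw [Function.iterate_succ_apply, map_add, map_smul, ih,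
        Function.iterate_succ_apply, Function.iterate_succ_apply]
  have hsv : s v = α • v + w := by rw [hw]; abel
  have hkey : ∀ N : ℕ, 0 < N → (inner ℝ ((⇑r)^[N] w) w : ℝ) = -α ^ 2 := by
    intro N hN
    have h0 := horth N hN
    have h1 : (inner ℝ ((⇑r)^[N] (s v)) (s v) : ℝ) = 0 := by
      rw [← s.symm.inner_map_map ((⇑r)^[N] (s v)) (s v), s.symm_apply_apply] at *
      exact h0
    have h2 : (⇑r)^[N] (s v) = α • v + (⇑r)^[N] w := by
      rw [hsv, hiter_lin, hiterfix]
    rw [h2, hsv] at h1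
    have h3 : (inner ℝ ((⇑r)^[N] w) v : ℝ) = 0 := by
      calc (inner ℝ ((⇑r)^[N] w) v : ℝ) = inner ℝ ((⇑r)^[N] w) ((⇑r)^[N] v) := by
            rw [hiterfix]
        _ = inner ℝ w v := hinner_iter N w v
        _ = 0 := hwv
    have hvw : (inner ℝ v w : ℝ) = 0 := by rw [real_inner_comm]; exact hwv
    rw [inner_add_left, inner_add_right, inner_add_right, inner_smul_left,
      inner_smul_left, inner_smul_right, inner_smul_right, hvv, hvw, h3] at h1
    simp only [starRingEnd_apply, star_trivial] at h1
    nlinarith [h1]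
  have hterm : ∀ i j : ℕ, (inner ℝ ((⇑r)^[i + 1] w) ((⇑r)^[j + 1] w) : ℝ)
      = if i = j then ‖w‖ ^ 2 else -α ^ 2 := by
    intro i j
    rcases lt_trichotomy i j with hij | hij | hij
    · rw [if_neg hij.ne]
      have hdecomp : (⇑r)^[j + 1] w = (⇑r)^[i + 1] ((⇑r)^[j - i] w) := by
        rw [← Function.iterate_add_apply]
        congr 1
        omega
      rw [hdecomp, hinner_iter, real_inner_comm]
      exact hkey (j - i) (by omega)
    · rw [if_pos hij, hij, hinner_iter, real_inner_self_eq_norm_sq]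
    · rw [if_neg hij.ne']
      have hdecomp : (⇑r)^[i + 1] w = (⇑r)^[j + 1] ((⇑r)^[i - j] w) := by
        rw [← Function.iterate_add_apply]
        congr 1
        omega
      rw [hdecomp, hinner_iter]
      exact hkey (i - j) (by omega)
  have hbound : ∀ M : ℕ, 0 ≤ (M : ℝ) * ‖w‖ ^ 2 + ((M : ℝ) ^ 2 - M) * (-α ^ 2) := by
    intro M
    set u : H := ∑ i ∈ Finset.range M, (⇑r)^[i + 1] w with hu
    have hnn : (0 : ℝ) ≤ inner ℝ u u := real_inner_self_nonneg
    have hexp : (inner ℝ u u : ℝ)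
        = ∑ i ∈ Finset.range M, ∑ j ∈ Finset.range M,
            (inner ℝ ((⇑r)^[i + 1] w) ((⇑r)^[j + 1] w) : ℝ) := by
      rw [hu, sum_inner]
      exact Finset.sum_congr rfl fun i _ => inner_sum _ _ _
    have hrowsum : ∀ i ∈ Finset.range M,
        ∑ j ∈ Finset.range M, (inner ℝ ((⇑r)^[i + 1] w) ((⇑r)^[j + 1] w) : ℝ)
          = ‖w‖ ^ 2 + ((M : ℝ) - 1) * (-α ^ 2) := by
      intro i hi
      have : ∑ j ∈ Finset.range M, (inner ℝ ((⇑r)^[i + 1] w) ((⇑r)^[j + 1] w) : ℝ)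
          = ∑ j ∈ Finset.range M, (if i = j then ‖w‖ ^ 2 else -α ^ 2) := by
        exact Finset.sum_congr rfl fun j _ => hterm i j
      rw [this]
      have h1 : ∀ j : ℕ, (if i = j then ‖w‖ ^ 2 else -α ^ 2)
          = (-α ^ 2) + (if i = j then ‖w‖ ^ 2 - (-α ^ 2) else 0) := by
        intro j; split <;> ring
      simp_rw [h1]
      rw [Finset.sum_add_distrib, Finset.sum_const, Finset.sum_ite_eq]
      simp only [hi, if_pos, Finset.card_range, nsmul_eq_mul]
      ring
    rw [hexp, Finset.sum_congr rfl hrowsum, Finset.sum_const, Finset.card_range,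
      nsmul_eq_mul] at hnn
    nlinarith [hnn]
  by_contra hne
  have hα2 : 0 < α ^ 2 := by positivity
  obtain ⟨M, hM⟩ := exists_nat_gt (‖w‖ ^ 2 / α ^ 2 + 2)
  have hb := hbound M
  have hM' : (‖w‖ ^ 2 / α ^ 2 + 2) < M := hM
  have hdiv : ‖w‖ ^ 2 / α ^ 2 * α ^ 2 = ‖w‖ ^ 2 := by
    field_simp
  nlinarith [hb, hM', hdiv, sq_nonneg (‖w‖), hα2, mul_pos (lt_trans (by positivity) hM' : (0:ℝ) < M) hα2]
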